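/- For every Δ0 formula φ(x̄) over the nested relational type system (built from equality of Ur-elements, boolean connectives, and bounded quantifiers ∃x∈t, ∀x∈t), there exists an NRC expression Verify_φ(x̄) of output type Bool = Set(Unit) such that for every assignment of the free variables x̄ to objects of the appropriate types, Verify_φ(x̄) evaluates to the singleton {()} if and only if φ(x̄) holds, and to ∅ otherwise. -/

import Mathlib

/-- Nested relational types. -/
inductive NType : Type
  | U : NType
  | unit : NType
  | prod : NType → NType → NType
  | set : NType → NType

/-- Objects of a nested relational type over a set `α` of Ur-elements. -/
def Obj (α : Type) : NType → Type
  | .U => α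
  | .unit => Unit
  | .prod a b => Obj α a × Obj α b
  | .set t => Set (Obj α t)

/-- Typed de Bruijn variables over a context of types. -/
inductive Var : List NType → NType → Type
  | zero {Γ t} : Var (t :: Γ) t
  | succ {Γ s t} : Var Γ t → Var (s :: Γ) t

/-- Environments: assignments of objects to all variables of a context. -/
def Env (α : Type) (Γ : List NType) : Type := ∀ t, Var Γ t → Obj α t

def Env.nil {α : Type} : Env α [] := fun _ v => nomatch v

def Env.cons {α : Type} {Γ : List NType} {t : NType} (x : Obj α t) (ρ : Env α Γ) :
    Env α (t :: Γ) := fun s v =>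
  match v with
  | .zero => x
  | .succ w => ρ s w

/-- Terms: variables, unit, tupling and projections. -/
inductive Tm : List NType → NType → Type
  | var {Γ t} : Var Γ t → Tm Γ t
  | unit {Γ} : Tm Γ .unit
  | pair {Γ a b} : Tm Γ a → Tm Γ b → Tm Γ (.prod a b)
  | fst {Γ a b} : Tm Γ (.prod a b) → Tm Γ a
  | snd {Γ a b} : Tm Γ (.prod a b) → Tm Γ b

def Tm.eval {α : Type} {Γ : List NType} (ρ : Env α Γ) : ∀ {t}, Tm Γ t → Obj α t
  | _, .var v => ρ _ v
  | _, .unit => (() : Unit)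
  | _, .pair a b => ((Tm.eval ρ a, Tm.eval ρ b) : _ × _)
  | _, .fst (a := a) (b := b) p => (Tm.eval ρ p : Obj α a × Obj α b).1
  | _, .snd (a := a) (b := b) p => (Tm.eval ρ p : Obj α a × Obj α b).2

/-- Δ₀ formulas: (dis)equality of Ur-elements, ⊤, ⊥, ∧, ∨ and bounded quantifiers. -/
inductive Delta0 : List NType → Type
  | eqU {Γ} : Tm Γ .U → Tm Γ .U → Delta0 Γ
  | neU {Γ} : Tm Γ .U → Tm Γ .U → Delta0 Γ
  | tru {Γ} : Delta0 Γ
  | fls {Γ} : Delta0 Γ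
  | and {Γ} : Delta0 Γ → Delta0 Γ → Delta0 Γ
  | or {Γ} : Delta0 Γ → Delta0 Γ → Delta0 Γ
  | all {Γ t} : Tm Γ (.set t) → Delta0 (t :: Γ) → Delta0 Γ
  | ex {Γ t} : Tm Γ (.set t) → Delta0 (t :: Γ) → Delta0 Γ

/-- Satisfaction of a Δ₀ formula in an environment. -/
def Delta0.sat {α : Type} : ∀ {Γ}, Env α Γ → Delta0 Γ → Prop
  | _, ρ, .eqU a b => Tm.eval ρ a = Tm.eval ρ b
  | _, ρ, .neU a b => Tm.eval ρ a ≠ Tm.eval ρ b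
  | _, _, .tru => True
  | _, _, .fls => False
  | _, ρ, .and φ ψ => Delta0.sat ρ φ ∧ Delta0.sat ρ ψ
  | _, ρ, .or φ ψ => Delta0.sat ρ φ ∨ Delta0.sat ρ ψ
  | _, ρ, .all (t := T) s φ =>
      ∀ x : Obj _ T, x ∈ (show Set (Obj _ T) from Tm.eval ρ s) → Delta0.sat (Env.cons x ρ) φ
  | _, ρ, .ex (t := T) s φ =>
      ∃ x : Obj _ T, x ∈ (show Set (Obj _ T) from Tm.eval ρ s) ∧ Delta0.sat (Env.cons x ρ) φ

/-- Nested relational calculus expressions. -/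
inductive NRC : List NType → NType → Type
  | var {Γ t} : Var Γ t → NRC Γ t
  | unit {Γ} : NRC Γ .unit
  | pair {Γ a b} : NRC Γ a → NRC Γ b → NRC Γ (.prod a b)
  | fst {Γ a b} : NRC Γ (.prod a b) → NRC Γ a
  | snd {Γ a b} : NRC Γ (.prod a b) → NRC Γ b
  | sing {Γ t} : NRC Γ t → NRC Γ (.set t)
  | empty {Γ t} : NRC Γ (.set t)
  | union {Γ t} : NRC Γ (.set t) → NRC Γ (.set t) → NRC Γ (.set t)
  | diff {Γ t} : NRC Γ (.set t) → NRC Γ (.set t) → NRC Γ (.set t)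
  | bigUnion {Γ a b} : NRC (a :: Γ) (.set b) → NRC Γ (.set a) → NRC Γ (.set b)

/-- Semantics of NRC expressions. -/
def NRC.eval {α : Type} : ∀ {Γ}, Env α Γ → ∀ {t}, NRC Γ t → Obj α t
  | _, ρ, _, .var v => ρ _ v
  | _, _, _, .unit => (() : Unit)
  | _, ρ, _, .pair a b => ((NRC.eval ρ a, NRC.eval ρ b) : _ × _)
  | _, ρ, _, .fst (a := a) (b := b) p => (NRC.eval ρ p : Obj α a × Obj α b).1
  | _, ρ, _, .snd (a := a) (b := b) p => (NRC.eval ρ p : Obj α a × Obj α b).2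
  | _, ρ, _, .sing e => ({NRC.eval ρ e} : Set _)
  | _, _, _, .empty => (∅ : Set _)
  | _, ρ, _, .union e1 e2 => ((NRC.eval ρ e1 : Set _) ∪ (NRC.eval ρ e2 : Set _) : Set _)
  | _, ρ, _, .diff e1 e2 => ((NRC.eval ρ e1 : Set _) \ (NRC.eval ρ e2 : Set _) : Set _)
  | _, ρ, _, .bigUnion (a := a) (b := b) e2 e1 =>
      show Set (Obj α b) from
        ⋃ x ∈ (show Set (Obj α a) from NRC.eval ρ e1),
          (show Set (Obj α b) from NRC.eval (Env.cons x ρ) e2)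

/-- The Boolean type `Set(Unit)`. -/
abbrev NType.bool : NType := .set .unit

/-- Embedding of terms into NRC. -/
def Tm.toNRC : ∀ {Γ t}, Tm Γ t → NRC Γ t
  | _, _, .var v => .var v
  | _, _, .unit => .unit
  | _, _, .pair a b => .pair a.toNRC b.toNRC
  | _, _, .fst p => .fst p.toNRC
  | _, _, .snd p => .snd p.toNRC

lemma Tm.toNRC_eval {α : Type} : ∀ {Γ} (ρ : Env α Γ) {t} (e : Tm Γ t),
    NRC.eval ρ e.toNRC = e.eval ρ := by
  intro Γ ρ t e
  induction e <;> simp [Tm.toNRC, NRC.eval, Tm.eval, *] <;> rfl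

@[simp ↓ high] lemma Obj.unit_eq {α : Type} {Γ : List NType} (ρ : Env α Γ) :
    NRC.eval ρ (NRC.sing NRC.unit : NRC Γ NType.bool) = (Set.univ : Set (Obj α .unit)) :=
  Set.ext fun _ => ⟨fun _ => trivial, fun _ => rfl⟩

/-- Key helper: a verifier whose value is `{u | sat}`. -/
theorem delta0_verify_aux : ∀ {Γ : List NType} (φ : Delta0 Γ),
    ∃ E : NRC Γ NType.bool,
      ∀ (α : Type) (ρ : Env α Γ),
        NRC.eval ρ E = {_u : Obj α .unit | Delta0.sat ρ φ} := by
  intro Γ φ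
  induction φ with
  | eqU a b =>
      refine ⟨.diff (.sing .unit)
        (.bigUnion (.sing .unit) (.diff (.sing a.toNRC) (.sing b.toNRC))), ?_⟩
      intro α ρ
      refine Set.ext fun u => ?_
      simp [NRC.eval, Tm.toNRC_eval, Delta0.sat, Obj.unit_eq]
  | neU a b =>
      refine ⟨.bigUnion (.sing .unit) (.diff (.sing a.toNRC) (.sing b.toNRC)), ?_⟩
      intro α ρ
      refine Set.ext fun u => ?_
      simp [NRC.eval, Tm.toNRC_eval, Delta0.sat, Obj.unit_eq]
  | tru =>
      exact ⟨.sing .unit, fun α ρ => by refine Set.ext fun u => ?_; simp [NRC.eval, Delta0.sat, Obj.unit_eq]⟩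
  | fls =>
      exact ⟨.empty, fun α ρ => by refine Set.ext fun u => ?_; simp [NRC.eval, Delta0.sat, Obj.unit_eq]⟩
  | and φ ψ ih1 ih2 =>
      obtain ⟨E1, h1⟩ := ih1
      obtain ⟨E2, h2⟩ := ih2
      refine ⟨.diff E1 (.diff (.sing .unit) E2), ?_⟩
      intro α ρ
      refine Set.ext fun u => ?_
      simp [NRC.eval, h1, h2, Delta0.sat]
  | or φ ψ ih1 ih2 =>
      obtain ⟨E1, h1⟩ := ih1
      obtain ⟨E2, h2⟩ := ih2
      refine ⟨.union E1 E2, ?_⟩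
      intro α ρ
      refine Set.ext fun u => ?_
      simp [NRC.eval, h1, h2, Delta0.sat]
  | all s φ ih =>
      obtain ⟨E, h⟩ := ih
      refine ⟨.diff (.sing .unit)
        (.bigUnion (.diff (.sing .unit) E) s.toNRC), ?_⟩
      intro α ρ
      refine Set.ext fun u => ?_
      simp [NRC.eval, h, Tm.toNRC_eval, Delta0.sat, Obj.unit_eq]
  | ex s φ ih =>
      obtain ⟨E, h⟩ := ih
      refine ⟨.bigUnion E s.toNRC, ?_⟩
      intro α ρ
      refine Set.ext fun u => ?_
      simp [NRC.eval, h, Tm.toNRC_eval, Delta0.sat, Obj.unit_eq]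

/-- For every Δ₀ formula φ over the nested relational type system there is
an NRC expression `Verify_φ` of type `Bool = Set(Unit)` which, for every assignment of the
free variables, evaluates to the singleton `{()}` if φ holds and to `∅` otherwise. -/
theorem delta0_verify_in_NRC (Γ : List NType) (φ : Delta0 Γ) :
    ∃ E : NRC Γ NType.bool,
      ∀ (α : Type) (ρ : Env α Γ),
        (Delta0.sat ρ φ →
          NRC.eval ρ E = (show Set (Obj α .unit) from {(() : Obj α .unit)})) ∧
        (¬ Delta0.sat ρ φ →
          NRC.eval ρ E = (show Set (Obj α .unit) from ∅)) := by
  obtain ⟨E, hE⟩ := delta0_verify_aux φ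
  refine ⟨E, fun α ρ => ⟨fun hs => ?_, fun hs => ?_⟩⟩ <;>
    rw [hE] <;> refine Set.ext fun u => ?_ <;> simp [hs, Obj.unit_eq] <;> rfl
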